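/- Fix integers s ≥ 2 and p ≥ 1. The real power series ∑_{m≥0} R_{s,p}(m)²·u^m has radius of convergence exactly ζ_c²: it converges for |u| < ζ_c² and diverges for |u| > ζ_c². Moreover the sequence m ↦ R_{s,p}(m)²·ζ_c^{2m}·m³ converges to C_{s,p} := p²·s^{2p−1}/(2π·(s−1)^{2p+1}) as m → ∞. -/

import Mathlib

open Filter

/-- Raney number `R_{s,p}(n) = (p/(s·n+p))·C(s·n+p, n)` as a real number. -/
noncomputable def raney (s p n : ℕ) : ℝ :=
  (p : ℝ) / (s * n + p) * (Nat.choose (s * n + p) n : ℝ)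

/-- The analytic threshold `ζ_c = (s-1)^{s-1}/s^s`. -/
noncomputable def zetaC (s : ℕ) : ℝ := ((s : ℝ) - 1) ^ (s - 1) / (s : ℝ) ^ s

section Aux
open Real Nat Topology

lemma st_sq (m : ℕ) (hm : 1 ≤ m) :
    Stirling.stirlingSeq m ^ 2 = (m ! : ℝ)^2 / ((2*m) * (((m:ℝ)/Real.exp 1)^m)^2) := by
  have hm' : (0:ℝ) < m := by exact_mod_cast hm
  rw [Stirling.stirlingSeq, div_pow, mul_pow, Real.sq_sqrt (by positivity)]

set_option maxHeartbeats 1000000 in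
lemma key_id (q p n : ℕ) (hq : 1 ≤ q) (hp : 1 ≤ p) (hn : 1 ≤ n) :
    raney (q+1) p n ^ 2 * zetaC (q+1) ^ (2*n) * (n:ℝ)^3 =
    (p:ℝ)^2 * (Stirling.stirlingSeq ((q+1)*n+p) /
        (Stirling.stirlingSeq n * Stirling.stirlingSeq (q*n+p)))^2
      * ((n:ℝ)^2 / (2 * (((q+1)*n+p : ℕ):ℝ) * ((q*n+p : ℕ):ℝ)))
      * (((((q+1)*n+p : ℕ):ℝ)/(((q:ℝ)+1)*n))^((q+1)*n+p)
          / (((q*n+p : ℕ):ℝ)/((q:ℝ)*n))^(q*n+p))^2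
      * (((q:ℝ)+1)^p/(q:ℝ)^p)^2 := by
  have hn' : (0:ℝ) < n := by exact_mod_cast hn
  have hq' : (0:ℝ) < q := by exact_mod_cast hq
  have hsub : (q+1)*n + p - n = q*n + p := by
    have : (q+1)*n = q*n + n := by ring
    omega
  have hchoose : ((((q+1)*n+p).choose n : ℕ) : ℝ)
      = (((q+1)*n+p)! : ℝ) / ((n ! : ℝ) * ((q*n+p)! : ℝ)) := by
    rw [Nat.cast_choose ℝ (by nlinarith [Nat.one_le_iff_ne_zero.mp hn] : n ≤ (q+1)*n+p), hsub]
  rw [raney, hchoose, zetaC]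
  simp only [div_pow, mul_pow]
  rw [st_sq _ (by nlinarith : 1 ≤ (q+1)*n+p), st_sq _ hn, st_sq _ (by nlinarith : 1 ≤ q*n+p)]
  have hc1 : (((q+1:ℕ):ℝ)) - 1 = (q:ℝ) := by push_cast; ring
  rw [hc1]
  have hc2 : (q+1) - 1 = q := by omega
  rw [hc2]
  have hA : (0:ℝ) < ((q:ℝ)+1)*n + p := by positivity
  have hC : (0:ℝ) < (q:ℝ)*n + p := by positivity
  have hFA : (0:ℝ) < (((q+1)*n+p)! : ℝ) := by exact_mod_cast Nat.factorial_pos _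
  have hFn : (0:ℝ) < ((n)! : ℝ) := by exact_mod_cast Nat.factorial_pos _
  have hFC : (0:ℝ) < ((q*n+p)! : ℝ) := by exact_mod_cast Nat.factorial_pos _
  push_cast
  simp only [div_pow, mul_pow]
  have hE : Real.exp 1 ≠ 0 := (Real.exp_pos 1).ne'
  have hK : (q:ℝ) ≠ 0 := ne_of_gt hq'
  have hN : (n:ℝ) ≠ 0 := ne_of_gt hn'
  have hS : ((q:ℝ)+1) ≠ 0 := by positivity
  have hA' : ((q:ℝ)+1) * n + p ≠ 0 := ne_of_gt hA
  have hC' : (q:ℝ) * n + p ≠ 0 := ne_of_gt hC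
  have hFA' : ((((q+1)*n+p)!:ℕ) : ℝ) ≠ 0 := ne_of_gt hFA
  have hFn' : ((n ! :ℕ) : ℝ) ≠ 0 := ne_of_gt hFn
  have hFC' : (((q*n+p)! :ℕ) : ℝ) ≠ 0 := ne_of_gt hFC
  set E := Real.exp 1 with hEdef
  set S := (q:ℝ)+1 with hSdef
  clear_value E S
  clear hEdef hSdef
  field_simp
  ring

/-- coefficient sequences tending to atTop -/
lemma tendsto_affine (a b : ℕ) (ha : 1 ≤ a) :
    Tendsto (fun n : ℕ => a*n + b) atTop atTop := by
  refine tendsto_atTop_mono (fun n => ?_) tendsto_id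
  calc (n:ℕ) = 1*n := (one_mul n).symm
  _ ≤ a*n := Nat.mul_le_mul_right n ha
  _ ≤ a*n + b := Nat.le_add_right _ _

lemma tendsto_exp_piece (a p : ℕ) (ha : 1 ≤ a) (hp : 1 ≤ p) :
    Tendsto (fun n : ℕ => (((a*n+p : ℕ):ℝ)/((a:ℝ)*n))^(a*n+p)) atTop
      (𝓝 (Real.exp p)) := by
  have hbase : Tendsto (fun m : ℕ => (1 + (p:ℝ)/m)) atTop (𝓝 1) := by
    simpa using (tendsto_const_div_atTop_nhds_zero_nat (p:ℝ)).const_add 1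
  have hF : Tendsto (fun m : ℕ => (1 + (p:ℝ)/m)^m * (1 + (p:ℝ)/m)^p) atTop
      (𝓝 (Real.exp p * 1)) := by
    exact (Real.tendsto_one_add_div_pow_exp (p:ℝ)).mul (by simpa using hbase.pow p)
  have hcomp := hF.comp (tendsto_affine a 0 ha)
  rw [mul_one] at hcomp
  refine hcomp.congr' ?_
  filter_upwards [eventually_ge_atTop 1] with n hn
  have hn' : (0:ℝ) < n := by exact_mod_cast hn
  have ha' : (0:ℝ) < a := by exact_mod_cast ha
  have h1 : ((a*n+0 : ℕ):ℝ) = (a:ℝ)*n := by push_cast; ring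
  simp only [Function.comp]
  have h2 : (1 + (p:ℝ)/((a*n+0 : ℕ):ℝ)) = ((a*n+p : ℕ):ℝ)/((a:ℝ)*n) := by
    rw [h1]; field_simp; push_cast; ring
  rw [h2, ← pow_add]
  norm_num

lemma main_tendsto (s p : ℕ) (hs : 2 ≤ s) (hp : 1 ≤ p) :
    Tendsto (fun n : ℕ => raney s p n ^ 2 * zetaC s ^ (2*n) * (n:ℝ)^3) atTop
      (𝓝 ((p:ℝ)^2 * (s:ℝ)^(2*p-1) / (2*Real.pi*((s:ℝ)-1)^(2*p+1)))) := by
  obtain ⟨q, rfl⟩ : ∃ q, s = q + 1 := ⟨s-1, by omega⟩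
  have hq : 1 ≤ q := by omega
  have hq' : (0:ℝ) < q := by exact_mod_cast hq
  have hp' : (0:ℝ) < p := by exact_mod_cast hp
  -- limit of the stirling ratio part
  have hstA := Stirling.tendsto_stirlingSeq_sqrt_pi.comp (tendsto_affine (q+1) p (by omega))
  have hstC := Stirling.tendsto_stirlingSeq_sqrt_pi.comp (tendsto_affine q p hq)
  have hpi : (0:ℝ) < √π := Real.sqrt_pos.mpr Real.pi_pos
  have hst : Tendsto (fun n : ℕ => (Stirling.stirlingSeq ((q+1)*n+p) /
      (Stirling.stirlingSeq n * Stirling.stirlingSeq (q*n+p)))^2) atTop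
      (𝓝 ((√π / (√π * √π))^2)) :=
    (hstA.div (Stirling.tendsto_stirlingSeq_sqrt_pi.mul hstC) (by positivity)).pow 2
  have hval1 : ((√π / (√π * √π))^2) = π⁻¹ := by
    rw [Real.mul_self_sqrt Real.pi_pos.le]
    rw [div_pow, Real.sq_sqrt Real.pi_pos.le]
    field_simp
  rw [hval1] at hst
  -- limit of the rational part
  have hdiv : Tendsto (fun n : ℕ => (p:ℝ)/n) atTop (𝓝 0) :=
    tendsto_const_div_atTop_nhds_zero_nat (p:ℝ)
  have hrat : Tendsto (fun n : ℕ =>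
      (n:ℝ)^2 / (2 * (((q+1)*n+p : ℕ):ℝ) * ((q*n+p : ℕ):ℝ))) atTop
      (𝓝 (1 / (2 * ((q:ℝ)+1) * (q:ℝ)))) := by
    have h1 : Tendsto (fun n : ℕ => 1 / (2 * (((q:ℝ)+1) + (p:ℝ)/n) * ((q:ℝ) + (p:ℝ)/n)))
        atTop (𝓝 (1 / (2 * (((q:ℝ)+1) + 0) * ((q:ℝ) + 0)))) := by
      apply Tendsto.div tendsto_const_nhds
      · exact ((tendsto_const_nhds.mul (tendsto_const_nhds.add hdiv)).mul
          (tendsto_const_nhds.add hdiv))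
      · positivity
    simp only [add_zero] at h1
    refine h1.congr' ?_
    filter_upwards [eventually_ge_atTop 1] with n hn
    have hn' : (0:ℝ) < n := by exact_mod_cast hn
    push_cast
    field_simp
  -- limit of the exp pieces
  have hexpA := tendsto_exp_piece (q+1) p (by omega) hp
  have hexpC := tendsto_exp_piece q p hq hp
  have hexp : Tendsto (fun n : ℕ =>
      (((((q+1)*n+p : ℕ):ℝ)/(((q:ℝ)+1)*n))^((q+1)*n+p)
        / (((q*n+p : ℕ):ℝ)/((q:ℝ)*n))^(q*n+p))^2) atTop
      (𝓝 ((Real.exp p / Real.exp p)^2)) := by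
    refine Tendsto.pow ?_ 2
    refine Tendsto.congr (fun n => ?_) (hexpA.div hexpC (Real.exp_pos _).ne')
    simp only [Pi.div_apply]
    push_cast
    ring
  have hval2 : ((Real.exp (p:ℝ) / Real.exp (p:ℝ))^2) = 1 := by
    rw [div_self (Real.exp_pos _).ne', one_pow]
  rw [hval2] at hexp
  -- assemble
  have hG : Tendsto (fun n : ℕ =>
      (p:ℝ)^2 * (Stirling.stirlingSeq ((q+1)*n+p) /
        (Stirling.stirlingSeq n * Stirling.stirlingSeq (q*n+p)))^2
      * ((n:ℝ)^2 / (2 * (((q+1)*n+p : ℕ):ℝ) * ((q*n+p : ℕ):ℝ)))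
      * (((((q+1)*n+p : ℕ):ℝ)/(((q:ℝ)+1)*n))^((q+1)*n+p)
          / (((q*n+p : ℕ):ℝ)/((q:ℝ)*n))^(q*n+p))^2
      * (((q:ℝ)+1)^p/(q:ℝ)^p)^2) atTop
      (𝓝 ((p:ℝ)^2 * π⁻¹ * (1 / (2 * ((q:ℝ)+1) * (q:ℝ))) * 1 * (((q:ℝ)+1)^p/(q:ℝ)^p)^2)) := by
    exact ((((tendsto_const_nhds.mul hst).mul hrat).mul hexp).mul tendsto_const_nhds)
  have hval3 : ((p:ℝ)^2 * π⁻¹ * (1 / (2 * ((q:ℝ)+1) * (q:ℝ))) * 1 * (((q:ℝ)+1)^p/(q:ℝ)^p)^2)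
      = (p:ℝ)^2 * (((q+1:ℕ)):ℝ)^(2*p-1) / (2*Real.pi*((((q+1:ℕ)):ℝ)-1)^(2*p+1)) := by
    obtain ⟨r, rfl⟩ : ∃ r, p = r+1 := ⟨p-1, by omega⟩
    have hc : (((q+1:ℕ)):ℝ) = (q:ℝ)+1 := by push_cast; ring
    rw [hc]
    have h2p : 2*(r+1)-1 = 2*r+1 := by omega
    rw [h2p]
    have hpi0 : Real.pi ≠ 0 := Real.pi_ne_zero
    have hq1 : ((q:ℝ)+1) ≠ 0 := by positivity
    have hq0 : (q:ℝ) ≠ 0 := ne_of_gt hq'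
    field_simp
    ring
  rw [hval3] at hG
  -- now transfer hG to the raney form via key_id
  refine hG.congr' ?_
  filter_upwards [eventually_ge_atTop 1] with n hn
  exact (key_id q p n hq hp hn).symm

end Aux

open Real Nat Topology in
/-- The series `∑ R_{s,p}(m)²·u^m` has radius of convergence exactly `ζ_c²`,
and `R_{s,p}(m)²·ζ_c^{2m}·m³ → C_{s,p} = p²·s^{2p−1}/(2π·(s−1)^{2p+1})`. -/
theorem stmt16 (s p : ℕ) (hs : 2 ≤ s) (hp : 1 ≤ p) :
    (∀ u : ℝ, |u| < zetaC s ^ 2 →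
        Summable (fun m : ℕ => raney s p m ^ 2 * u ^ m)) ∧
    (∀ u : ℝ, zetaC s ^ 2 < |u| →
        ¬ Summable (fun m : ℕ => raney s p m ^ 2 * u ^ m)) ∧
    Tendsto (fun m : ℕ => raney s p m ^ 2 * zetaC s ^ (2 * m) * (m : ℝ) ^ 3)
      atTop
      (nhds ((p : ℝ) ^ 2 * (s : ℝ) ^ (2 * p - 1)
        / (2 * Real.pi * ((s : ℝ) - 1) ^ (2 * p + 1)))) := by
  have hs1 : (0:ℝ) < (s:ℝ) - 1 := by
    have : (2:ℝ) ≤ (s:ℝ) := by exact_mod_cast hs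
    linarith
  have hs0 : (0:ℝ) < (s:ℝ) := by linarith
  have hp' : (0:ℝ) < (p:ℝ) := by exact_mod_cast hp
  have hζ : 0 < zetaC s := div_pos (pow_pos hs1 _) (pow_pos hs0 _)
  have hmain := main_tendsto s p hs hp
  have hCpos : 0 < (p:ℝ)^2 * (s:ℝ)^(2*p-1) / (2*Real.pi*((s:ℝ)-1)^(2*p+1)) := by
    apply div_pos (mul_pos (pow_pos hp' 2) (pow_pos hs0 _))
    exact mul_pos (by linarith [Real.pi_pos]) (pow_pos hs1 _)
  refine ⟨?_, ?_, hmain⟩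
  · intro u hu
    obtain ⟨M, hMmem⟩ := hmain.bddAbove_range
    have hMb : ∀ m : ℕ, raney s p m ^ 2 * zetaC s ^ (2*m) * (m:ℝ)^3 ≤ M :=
      fun m => hMmem ⟨m, rfl⟩
    set r := |u| / zetaC s ^ 2 with hr
    have hr0 : 0 ≤ r := div_nonneg (abs_nonneg u) (by positivity)
    have hr1 : r < 1 := (div_lt_one (by positivity)).mpr hu
    refine Summable.of_norm_bounded
      ((summable_geometric_of_lt_one hr0 hr1).mul_left (max M 1)) (fun m => ?_)
    have habs : |u| = zetaC s ^ 2 * r := by rw [hr]; field_simp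
    rw [Real.norm_eq_abs, abs_mul, abs_of_nonneg (sq_nonneg (raney s p m)), abs_pow]
    match m with
    | 0 =>
      have : raney s p 0 = 1 := by
        simp [raney, div_self (ne_of_gt hp')]
      simp [this]
    | Nat.succ k =>
      set m := k + 1
      have hm1 : (1:ℝ) ≤ (m:ℝ)^3 := by
        have : (1:ℝ) ≤ (m:ℝ) := by exact_mod_cast Nat.one_le_iff_ne_zero.mpr (by omega)
        exact one_le_pow₀ this
      have step1 : raney s p m ^2 * zetaC s ^(2*m) ≤ M := by
        calc raney s p m ^2 * zetaC s ^(2*m)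
            ≤ raney s p m ^2 * zetaC s ^(2*m) * (m:ℝ)^3 :=
              le_mul_of_one_le_right (by positivity) hm1
          _ ≤ M := hMb m
      calc raney s p m ^ 2 * |u| ^ m
          = raney s p m ^2 * zetaC s ^(2*m) * r^m := by
            rw [habs, mul_pow, pow_mul]; ring
        _ ≤ M * r^m := mul_le_mul_of_nonneg_right step1 (by positivity)
        _ ≤ max M 1 * r^m := mul_le_mul_of_nonneg_right (le_max_left M 1) (by positivity)
  · intro u hu hsum
    have hu0 : (0:ℝ) < |u| := lt_trans (by positivity) hu
    set ρ := zetaC s ^ 2 / |u| with hρ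
    have hρ0 : 0 ≤ ρ := div_nonneg (by positivity) hu0.le
    have hρ1 : ρ < 1 := (div_lt_one hu0).mpr hu
    have h1 : Tendsto (fun m : ℕ => |raney s p m ^2 * u^m|) atTop (𝓝 0) := by
      simpa using hsum.tendsto_atTop_zero.abs
    have h2 : Tendsto (fun m : ℕ => (m:ℝ)^3 * ρ^m) atTop (𝓝 0) := by
      refine (summable_pow_mul_geometric_of_norm_lt_one (R := ℝ) 3 ?_).tendsto_atTop_zero
      rwa [Real.norm_eq_abs, abs_of_nonneg hρ0]
    have h3 : Tendsto (fun m : ℕ => |raney s p m ^2 * u^m| * ((m:ℝ)^3 * ρ^m)) atTop (𝓝 0) := by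
      simpa using h1.mul h2
    have hmul : |u| * ρ = zetaC s ^ 2 := by rw [hρ]; field_simp
    have h4 : (fun m : ℕ => |raney s p m ^2 * u^m| * ((m:ℝ)^3 * ρ^m))
        = (fun m : ℕ => raney s p m ^ 2 * zetaC s ^ (2*m) * (m:ℝ)^3) := by
      funext m
      rw [abs_mul, abs_of_nonneg (sq_nonneg (raney s p m)), abs_pow, pow_mul, ← hmul, mul_pow]
      ring
    rw [h4] at h3
    have := tendsto_nhds_unique hmain h3
    linarith
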